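/- Proposition 1: Let V_0 = ∅ and, for t = 0, 1, …, T−1, let V_{t+1} = V_t ∪ {x_t} where x_t ∉ V_t satisfies V_{t+1} ∈ J and G(V_t ∪ {x_t}) − G(V_t) ≥ G(V_t ∪ {y}) − G(V_t) for every y ∉ V_t with V_t ∪ {y} ∈ J, and suppose V_T is maximal in J (no y ∉ V_T has V_T ∪ {y} ∈ J). Then the greedy caching strategy achieves the hit ratio within a factor 1/2 of the optimum: G(V_T) ≥ (1/2)·max_{V ∈ J} G(V). -/

import Mathlib

open Finset

section GreedyAux

variable {N F : Type*} [Fintype N] [Fintype F] [DecidableEq N] [DecidableEq F]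
variable (P : N → ℝ) (Q : N × F → ℝ) (p : N × N → ℝ)

/-- The explicit hit-ratio function. -/
noncomputable def gfun (V : Finset (N × F)) : ℝ :=
  ∑ u : N, ∑ f : F,
    P u * Q (u, f) *
      (1 - ∏ v ∈ Finset.univ.filter (fun v : N => (v, f) ∈ V), (1 - p (u, v)))

lemma prodp_nonneg (hp1 : ∀ x, p x ≤ 1) (u : N) (s : Finset N) :
    0 ≤ ∏ v ∈ s, (1 - p (u, v)) :=
  Finset.prod_nonneg fun v _ => by have := hp1 (u, v); linarith

lemma prodp_le_one (hp0 : ∀ x, 0 ≤ p x) (hp1 : ∀ x, p x ≤ 1) (u : N) (s : Finset N) :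
    ∏ v ∈ s, (1 - p (u, v)) ≤ 1 :=
  Finset.prod_le_one (fun v _ => by have := hp1 (u, v); linarith)
    (fun v _ => by have := hp0 (u, v); linarith)

lemma prodp_anti (hp0 : ∀ x, 0 ≤ p x) (hp1 : ∀ x, p x ≤ 1) (u : N)
    {s t : Finset N} (hst : s ⊆ t) :
    ∏ v ∈ t, (1 - p (u, v)) ≤ ∏ v ∈ s, (1 - p (u, v)) := by
  rw [← Finset.prod_sdiff hst]
  have h1 := prodp_le_one p hp0 hp1 u (t \ s)
  have h2 := prodp_nonneg p hp1 u s
  have h3 := prodp_nonneg p hp1 u (t \ s)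
  nlinarith

lemma prodp_submod (hp0 : ∀ x, 0 ≤ p x) (hp1 : ∀ x, p x ≤ 1) (u : N) (w : N)
    {s t : Finset N} (hst : s ⊆ t) :
    (∏ v ∈ t, (1 - p (u, v))) - ∏ v ∈ insert w t, (1 - p (u, v)) ≤
      (∏ v ∈ s, (1 - p (u, v))) - ∏ v ∈ insert w s, (1 - p (u, v)) := by
  by_cases hws : w ∈ s
  · rw [Finset.insert_eq_self.2 hws, Finset.insert_eq_self.2 (hst hws)]
    simp
  · rw [Finset.prod_insert hws]
    by_cases hwt : w ∈ t
    · rw [Finset.insert_eq_self.2 hwt]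
      have h2 := prodp_nonneg p hp1 u s
      have := hp0 (u, w)
      nlinarith
    · rw [Finset.prod_insert hwt]
      have h1 := prodp_anti p hp0 hp1 u hst
      have := hp0 (u, w)
      nlinarith

lemma filter_insert_mem (y : N × F) (A : Finset (N × F)) (f : F) :
    Finset.univ.filter (fun v : N => (v, f) ∈ insert y A) =
      (if f = y.2 then insert y.1 (Finset.univ.filter (fun v : N => (v, f) ∈ A))
        else Finset.univ.filter (fun v : N => (v, f) ∈ A)) := by
  split_ifs with h
  · subst h
    ext v
    simp [Prod.ext_iff, eq_comm]
  · ext v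
    simp only [Finset.mem_filter, Finset.mem_univ, true_and, Finset.mem_insert]
    constructor
    · rintro (hv | hv)
      · exact absurd (congrArg Prod.snd hv) h
      · exact hv
    · exact fun hv => Or.inr hv

lemma filter_subset_of_subset {A B : Finset (N × F)} (hAB : A ⊆ B) (f : F) :
    Finset.univ.filter (fun v : N => (v, f) ∈ A) ⊆
      Finset.univ.filter (fun v : N => (v, f) ∈ B) :=
  Finset.monotone_filter_right _ fun v _ hv => hAB hv

lemma gfun_mono (hP : ∀ u, 0 ≤ P u) (hQ : ∀ x, 0 ≤ Q x)
    (hp0 : ∀ x, 0 ≤ p x) (hp1 : ∀ x, p x ≤ 1)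
    {A B : Finset (N × F)} (hAB : A ⊆ B) : gfun P Q p A ≤ gfun P Q p B := by
  refine Finset.sum_le_sum fun u _ => Finset.sum_le_sum fun f _ => ?_
  have hc : 0 ≤ P u * Q (u, f) := mul_nonneg (hP u) (hQ (u, f))
  have := prodp_anti p hp0 hp1 u (filter_subset_of_subset hAB f)
  nlinarith

lemma gfun_submod (hP : ∀ u, 0 ≤ P u) (hQ : ∀ x, 0 ≤ Q x)
    (hp0 : ∀ x, 0 ≤ p x) (hp1 : ∀ x, p x ≤ 1)
    {A B : Finset (N × F)} (hAB : A ⊆ B) (y : N × F) :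
    gfun P Q p (insert y B) - gfun P Q p B ≤ gfun P Q p (insert y A) - gfun P Q p A := by
  unfold gfun
  rw [← Finset.sum_sub_distrib, ← Finset.sum_sub_distrib]
  refine Finset.sum_le_sum fun u _ => ?_
  rw [← Finset.sum_sub_distrib, ← Finset.sum_sub_distrib]
  refine Finset.sum_le_sum fun f _ => ?_
  have hc : 0 ≤ P u * Q (u, f) := mul_nonneg (hP u) (hQ (u, f))
  rw [filter_insert_mem, filter_insert_mem]
  by_cases h : f = y.2
  · simp only [h, if_true]
    have := prodp_submod p hp0 hp1 u y.1 (filter_subset_of_subset hAB f)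
    rw [h] at this
    subst h
    nlinarith [mul_le_mul_of_nonneg_left this hc]
  · simp only [h, if_false]
    simp

lemma gfun_empty : gfun P Q p (∅ : Finset (N × F)) = 0 := by
  unfold gfun
  simp

lemma gfun_union_le (hP : ∀ u, 0 ≤ P u) (hQ : ∀ x, 0 ≤ Q x)
    (hp0 : ∀ x, 0 ≤ p x) (hp1 : ∀ x, p x ≤ 1)
    (B : Finset (N × F)) (C : Finset (N × F)) :
    gfun P Q p (B ∪ C) ≤ gfun P Q p B +
      ∑ y ∈ C \ B, (gfun P Q p (insert y B) - gfun P Q p B) := by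
  classical
  induction C using Finset.induction_on with
  | empty => simp
  | @insert a C ha ih =>
    by_cases haB : a ∈ B
    · have h1 : B ∪ insert a C = B ∪ C := by
        rw [Finset.union_insert, Finset.insert_eq_self.2 (Finset.mem_union_left _ haB)]
      have h2 : insert a C \ B = C \ B := by
        rw [Finset.insert_sdiff_of_mem _ haB]
      rw [h1, h2]; exact ih
    · have h1 : B ∪ insert a C = insert a (B ∪ C) := by
        rw [Finset.union_insert]
      have h2 : insert a C \ B = insert a (C \ B) := by
        rw [Finset.insert_sdiff_of_notMem _ haB]
      have h3 : a ∉ C \ B := fun h => ha (Finset.mem_sdiff.1 h).1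
      rw [h1, h2, Finset.sum_insert h3]
      have h4 := gfun_submod P Q p hP hQ hp0 hp1 (Finset.subset_union_left (s₁ := B) (s₂ := C)) a
      linarith

end GreedyAux

/-- Proposition 1: starting from `V 0 = ∅`, the greedy algorithm for the
partition-matroid constraint `J` (each user caches at most `S` files) adds at
each step `t < T` a feasible configuration `x t ∉ V t` of maximal marginal
hit-ratio gain; if the final set `V T` is maximal in `J`, then the greedy
caching strategy achieves the hit ratio within the factor `1/2` of the
optimum over all feasible placements. -/
theorem greedy_caching_half_approximation
    {N F : Type*} [Fintype N] [Fintype F] [DecidableEq N] [DecidableEq F]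
    [Nonempty N] [Nonempty F]
    (P : N → ℝ) (Q : N × F → ℝ) (p : N × N → ℝ)
    (hP : ∀ u, 0 ≤ P u) (hQ : ∀ x, 0 ≤ Q x)
    (hp0 : ∀ x, 0 ≤ p x) (hp1 : ∀ x, p x ≤ 1)
    (G : Finset (N × F) → ℝ)
    (hG : ∀ V : Finset (N × F), G V = ∑ u : N, ∑ f : F,
      P u * Q (u, f) *
        (1 - ∏ v ∈ Finset.univ.filter (fun v : N => (v, f) ∈ V), (1 - p (u, v))))
    (S : ℕ)
    (J : Finset (N × F) → Prop)
    (hJ : ∀ V : Finset (N × F),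
      J V ↔ ∀ u : N, (V.filter (fun z : N × F => z.1 = u)).card ≤ S)
    (T : ℕ) (V : ℕ → Finset (N × F)) (x : ℕ → N × F)
    (hV0 : V 0 = ∅)
    (hstep : ∀ t < T, x t ∉ V t ∧ V (t + 1) = insert (x t) (V t) ∧ J (V (t + 1)) ∧
      ∀ y : N × F, y ∉ V t → J (insert y (V t)) →
        G (insert (x t) (V t)) - G (V t) ≥ G (insert y (V t)) - G (V t))
    (hmax : ∀ y : N × F, y ∉ V T → ¬ J (insert y (V T))) :
    ∀ Vopt : Finset (N × F), J Vopt → G (V T) ≥ (1 / 2 : ℝ) * G Vopt := by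
  intro Vopt hVopt
  have hGg : ∀ W : Finset (N × F), G W = gfun P Q p W := hG
  -- the greedy chain is increasing
  have hchain : ∀ s t : ℕ, s ≤ t → t ≤ T → V s ⊆ V t := by
    intro s t
    induction t with
    | zero => intro hst _; obtain rfl := Nat.le_zero.1 hst; exact subset_rfl
    | succ n ih =>
      intro hst hT
      rcases eq_or_lt_of_le hst with rfl | h
      · exact subset_rfl
      · have h1 : V s ⊆ V n := ih (Nat.lt_succ_iff.1 h) (le_trans (Nat.le_succ n) hT)
        have h2 := (hstep n (lt_of_lt_of_le (Nat.lt_succ_self n) hT)).2.1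
        rw [h2]; exact h1.trans (Finset.subset_insert _ _)
  -- counting per user
  have hcnt : ∀ t, t ≤ T → ∀ u : N,
      ((V t).filter (fun z : N × F => z.1 = u)).card =
        ((Finset.range t).filter (fun s => (x s).1 = u)).card := by
    intro t
    induction t with
    | zero => intro _ u; simp [hV0]
    | succ n ih =>
      intro hT u
      have hn : n < T := lt_of_lt_of_le (Nat.lt_succ_self n) hT
      obtain ⟨hx, hVn, -, -⟩ := hstep n hn
      rw [hVn, Finset.filter_insert, Finset.range_add_one, Finset.filter_insert]
      have hx' : x n ∉ (V n).filter (fun z : N × F => z.1 = u) :=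
        fun h => hx (Finset.mem_filter.1 h).1
      have hn' : n ∉ (Finset.range n).filter (fun s => (x s).1 = u) :=
        fun h => absurd (Finset.mem_range.1 (Finset.mem_filter.1 h).1) (lt_irrefl n)
      by_cases hxu : (x n).1 = u
      · rw [if_pos hxu, if_pos hxu, Finset.card_insert_of_notMem hx',
          Finset.card_insert_of_notMem hn', ih (Nat.le_of_lt hn) u]
      · rw [if_neg hxu, if_neg hxu, ih (Nat.le_of_lt hn) u]
  -- feasibility along the chain
  have hJt : ∀ t, t ≤ T → J (V t) := by
    intro t ht
    cases t with
    | zero => rw [hV0, hJ]; intro u; simp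
    | succ n => exact (hstep n (lt_of_lt_of_le (Nat.lt_succ_self n) ht)).2.2.1
  -- greedy gains are nonnegative
  have hgain0 : ∀ t, t < T → 0 ≤ G (V (t + 1)) - G (V t) := by
    intro t ht
    obtain ⟨-, hVt, -, -⟩ := hstep t ht
    rw [hVt, hGg, hGg]
    have := gfun_mono P Q p hP hQ hp0 hp1 (Finset.subset_insert (x t) (V t))
    linarith
  -- Step A+B : G Vopt ≤ G (V T) + ∑ marginals
  have hA : G Vopt ≤ G (V T) + ∑ y ∈ Vopt \ V T, (G (insert y (V T)) - G (V T)) := by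
    have h1 : gfun P Q p Vopt ≤ gfun P Q p (V T ∪ Vopt) :=
      gfun_mono P Q p hP hQ hp0 hp1 Finset.subset_union_right
    have h2 := gfun_union_le P Q p hP hQ hp0 hp1 (V T) Vopt
    simp only [hGg]
    linarith
  -- Step C : ∑ marginals ≤ ∑ greedy gains
  have hC : ∑ y ∈ Vopt \ V T, (G (insert y (V T)) - G (V T)) ≤
      ∑ t ∈ Finset.range T, (G (V (t + 1)) - G (V t)) := by
    rw [← Finset.sum_fiberwise (Vopt \ V T) (fun y : N × F => y.1)
        (fun y => G (insert y (V T)) - G (V T)),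
      ← Finset.sum_fiberwise (Finset.range T) (fun t => (x t).1)
        (fun t => G (V (t + 1)) - G (V t))]
    refine Finset.sum_le_sum fun u _ => ?_
    set s := (Vopt \ V T).filter (fun y : N × F => y.1 = u) with hs
    set ts := (Finset.range T).filter (fun t => (x t).1 = u) with hts
    rcases Finset.eq_empty_or_nonempty s with hse | hsne
    · rw [hse, Finset.sum_empty]
      exact Finset.sum_nonneg fun t ht =>
        hgain0 t (Finset.mem_range.1 (Finset.mem_filter.1 ht).1)
    · obtain ⟨y0, hy0s, hy0max⟩ :=
        Finset.exists_max_image s (fun y => G (insert y (V T)) - G (V T)) hsne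
      have hy0 : y0 ∈ Vopt \ V T := (Finset.mem_filter.1 hy0s).1
      have hy0u : y0.1 = u := (Finset.mem_filter.1 hy0s).2
      have hy0opt : y0 ∈ Vopt := (Finset.mem_sdiff.1 hy0).1
      have hy0nT : y0 ∉ V T := (Finset.mem_sdiff.1 hy0).2
      have hm0 : 0 ≤ G (insert y0 (V T)) - G (V T) := by
        rw [hGg, hGg]
        have := gfun_mono P Q p hP hQ hp0 hp1 (Finset.subset_insert y0 (V T))
        linarith
      -- s.card ≤ S
      have hcard1 : s.card ≤ S := by
        have hsub : s ⊆ Vopt.filter (fun z : N × F => z.1 = u) := by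
          intro z hz
          rw [hs, Finset.mem_filter] at hz
          exact Finset.mem_filter.2 ⟨(Finset.mem_sdiff.1 hz.1).1, hz.2⟩
        exact le_trans (Finset.card_le_card hsub) ((hJ Vopt).1 hVopt u)
      -- S ≤ count of u in V T
      have hScard : S ≤ ((V T).filter (fun z : N × F => z.1 = u)).card := by
        have hnotJ := hmax y0 hy0nT
        rw [hJ] at hnotJ
        push_neg at hnotJ
        obtain ⟨u', hu'⟩ := hnotJ
        by_cases h : u' = u
        · subst h
          rw [Finset.filter_insert, if_pos hy0u,
            Finset.card_insert_of_notMem (fun hh => hy0nT (Finset.mem_filter.1 hh).1)] at hu'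
          omega
        · exfalso
          rw [Finset.filter_insert,
            if_neg (show ¬ y0.1 = u' from fun hh => h (by rw [← hh]; exact hy0u))] at hu'
          exact absurd ((hJ (V T)).1 (hJt T le_rfl) u') (not_le.2 hu')
      have hcard2 : S ≤ ts.card := by
        rw [← hcnt T le_rfl u] at *
        exact hScard
      -- each greedy gain on a u-step dominates the best marginal
      have hgainge : ∀ t ∈ ts, G (insert y0 (V T)) - G (V T) ≤ G (V (t + 1)) - G (V t) := by
        intro t ht
        rw [hts, Finset.mem_filter, Finset.mem_range] at ht
        obtain ⟨htT, hxu⟩ := ht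
        obtain ⟨hxn, hVt, hJt1, hgreedy⟩ := hstep t htT
        have hsubVT : V t ⊆ V T := hchain t T (le_of_lt htT) le_rfl
        have hy0nt : y0 ∉ V t := fun h => hy0nT (hsubVT h)
        have hfeas : J (insert y0 (V t)) := by
          rw [hJ]
          intro u'
          by_cases h : y0.1 = u'
          · rw [Finset.filter_insert, if_pos h,
              Finset.card_insert_of_notMem (fun hh => hy0nt (Finset.mem_filter.1 hh).1)]
            have hxeq : ((V (t + 1)).filter (fun z : N × F => z.1 = u')).card =
                ((V t).filter (fun z : N × F => z.1 = u')).card + 1 := by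
              rw [hVt, Finset.filter_insert, if_pos (by rw [hxu, ← h, hy0u]),
                Finset.card_insert_of_notMem (fun hh => hxn (Finset.mem_filter.1 hh).1)]
            have := (hJ (V (t + 1))).1 hJt1 u'
            omega
          · rw [Finset.filter_insert, if_neg h]
            exact (hJ (V t)).1 (hJt t (le_of_lt htT)) u'
        have h1 := hgreedy y0 hy0nt hfeas
        have h2 : G (insert y0 (V T)) - G (V T) ≤ G (insert y0 (V t)) - G (V t) := by
          rw [hGg, hGg, hGg, hGg]
          exact gfun_submod P Q p hP hQ hp0 hp1 hsubVT y0
        rw [hVt]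
        linarith
      calc ∑ y ∈ s, (G (insert y (V T)) - G (V T))
          ≤ s.card • (G (insert y0 (V T)) - G (V T)) :=
            Finset.sum_le_card_nsmul s _ _ (fun y hy => hy0max y hy)
        _ ≤ ts.card • (G (insert y0 (V T)) - G (V T)) := by
            simp only [nsmul_eq_mul]
            exact mul_le_mul_of_nonneg_right
              (Nat.cast_le.2 (le_trans hcard1 hcard2)) hm0
        _ ≤ ∑ t ∈ ts, (G (V (t + 1)) - G (V t)) :=
            Finset.card_nsmul_le_sum ts _ _ hgainge
  -- Step D : telescoping
  have hD : ∑ t ∈ Finset.range T, (G (V (t + 1)) - G (V t)) = G (V T) := by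
    rw [Finset.sum_range_sub (fun t => G (V t)), hV0, hGg ∅, gfun_empty, sub_zero]
  linarith
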